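/- arXiv:2503.10425 — 2 statements merged into one kernel-verified Lean document; each statement's English description precedes it below -/
import Mathlib

section
/- Let G be a finite group, p a prime, and x a p-element of G. If y ∈ Sub_G(x) is G-conjugate to x, then y is already Sub_G(x)-conjugate to x. -/
variable {G : Type*} [Group G]

/-- `A` is subnormal in `B`: there is a chain `A = s 0 ⊴ s 1 ⊴ ⋯ ⊴ s n = B`. -/
def IsSubnormalIn (A B : Subgroup G) : Prop :=
  ∃ (n : ℕ) (s : ℕ → Subgroup G), s 0 = A ∧ s n = B ∧
    ∀ i < n, s i ≤ s (i + 1) ∧ ∀ g ∈ s (i + 1), ∀ a ∈ s i, g * a * g⁻¹ ∈ s i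

/-- The subnormaliser `Sub_G(x)` of an element `x`. -/
def subnormalizer (x : G) : Subgroup G :=
  Subgroup.closure
    {g : G | IsSubnormalIn (Subgroup.zpowers x) (Subgroup.closure {g, x})}

open Subgroup MulAction

theorem sn_refl (A : Subgroup G) : IsSubnormalIn A A :=
  ⟨0, fun _ => A, rfl, rfl, fun i hi => absurd hi (Nat.not_lt_zero i)⟩

theorem sn_descend {A B C : Subgroup G} (h : IsSubnormalIn A C) (hAB : A ≤ B) (hBC : B ≤ C) :
    IsSubnormalIn A B := by
  obtain ⟨n, s, h0, hn, hs⟩ := h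
  refine ⟨n, fun i => s i ⊓ B, by simp only [h0]; exact inf_eq_left.mpr hAB,
    by simp only [hn]; exact inf_eq_right.mpr hBC, fun i hi => ?_⟩
  obtain ⟨hle, hnorm⟩ := hs i hi
  constructor
  · exact inf_le_inf_right _ hle
  · intro g hg a ha
    rw [Subgroup.mem_inf] at hg ha ⊢
    exact ⟨hnorm g hg.1 a ha.1, mul_mem (mul_mem hg.2 ha.2) (inv_mem hg.2)⟩

theorem sn_append {A B C : Subgroup G} (h : IsSubnormalIn A B) (hBC : B ≤ C)
    (hnorm : ∀ g ∈ C, ∀ b ∈ B, g * b * g⁻¹ ∈ B) : IsSubnormalIn A C := by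
  obtain ⟨n, s, h0, hn, hs⟩ := h
  refine ⟨n + 1, fun i => if i ≤ n then s i else C, ?_, ?_, fun i hi => ?_⟩
  · simp [h0]
  · simp
  · rcases Nat.lt_succ_iff_lt_or_eq.mp hi with hlt | rfl
    · rw [show (fun i => if i ≤ n then s i else C) i = s i from if_pos hlt.le,
        show (fun i => if i ≤ n then s i else C) (i + 1) = s (i + 1) from
          if_pos (Nat.succ_le_of_lt hlt)]
      exact hs i hlt
    · rw [show (fun j => if j ≤ i then s j else C) i = s i from if_pos le_rfl,
        show (fun j => if j ≤ i then s j else C) (i + 1) = C from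
          if_neg (Nat.not_succ_le_self i), hn]
      exact ⟨hBC, hnorm⟩

theorem sn_prepend {A B C : Subgroup G} (hAB : A ≤ B)
    (hnorm : ∀ g ∈ B, ∀ a ∈ A, g * a * g⁻¹ ∈ A) (h : IsSubnormalIn B C) : IsSubnormalIn A C := by
  obtain ⟨n, s, h0, hn, hs⟩ := h
  refine ⟨n + 1, fun i => match i with | 0 => A | (j + 1) => s j, rfl, hn, fun i hi => ?_⟩
  match i with
  | 0 =>
    show A ≤ s 0 ∧ ∀ g ∈ s 0, ∀ a ∈ A, g * a * g⁻¹ ∈ A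
    rw [h0]
    exact ⟨hAB, hnorm⟩
  | (j + 1) => exact hs j (Nat.lt_of_succ_lt_succ hi)

theorem sn_map {M N : Type*} [Group M] [Group N] (f : M →* N) {A B : Subgroup M}
    (h : IsSubnormalIn A B) : IsSubnormalIn (A.map f) (B.map f) := by
  obtain ⟨n, s, h0, hn, hs⟩ := h
  refine ⟨n, fun i => (s i).map f, by simp only [h0], by simp only [hn], fun i hi => ?_⟩
  obtain ⟨hle, hnorm⟩ := hs i hi
  refine ⟨Subgroup.map_mono hle, ?_⟩
  rintro g hg a ha
  rw [Subgroup.mem_map] at hg ha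
  obtain ⟨u, hu, rfl⟩ := hg
  obtain ⟨v, hv, rfl⟩ := ha
  have : f u * f v * (f u)⁻¹ = f (u * v * u⁻¹) := by simp
  rw [this]
  exact Subgroup.mem_map_of_mem f (hnorm u hu v hv)

theorem sn_top_aux {H : Type*} [Group H] [Finite H] (hnc : NormalizerCondition H) :
    ∀ (k : ℕ) (A : Subgroup H), Nat.card H - Nat.card A ≤ k → IsSubnormalIn A ⊤ := by
  intro k
  induction k with
  | zero =>
    intro A hk
    have hle : Nat.card A ≤ Nat.card H :=
      Nat.card_le_card_of_injective A.subtype A.subtype_injective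
    have : A = ⊤ := Subgroup.eq_top_of_card_eq A (le_antisymm hle (by omega))
    rw [this]; exact sn_refl ⊤
  | succ k ih =>
    intro A hk
    by_cases htop : A = ⊤
    · rw [htop]; exact sn_refl ⊤
    · have hlt : A < (normalizer A) := hnc A (lt_top_iff_ne_top.mpr htop)
      have hcard : Nat.card A < Nat.card (normalizer (A : Set H)) := by
        rw [← SetLike.coe_sort_coe A, ← SetLike.coe_sort_coe (normalizer (A : Set H)),
          Nat.card_coe_set_eq, Nat.card_coe_set_eq]
        exact Set.ncard_lt_ncard (SetLike.coe_ssubset_coe.mpr hlt) (Set.toFinite _)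
      have hle : Nat.card (normalizer (A : Set H)) ≤ Nat.card H :=
        Nat.card_le_card_of_injective (normalizer (A : Set H)).subtype (normalizer (A : Set H)).subtype_injective
      refine sn_prepend le_normalizer ?_ (ih (normalizer (A : Set H)) (by omega))
      intro g hg a ha
      exact (Subgroup.mem_normalizer_iff.mp hg a).mp ha

theorem sn_of_le_pgroup [Finite G] {p : ℕ} (hp : p.Prime) {K A : Subgroup G}
    (hK : IsPGroup p K) (hAK : A ≤ K) : IsSubnormalIn A K := by
  haveI : Fact p.Prime := ⟨hp⟩
  haveI : Group.IsNilpotent ↥K := hK.isNilpotent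
  have hnc : NormalizerCondition ↥K := normalizerCondition_of_isNilpotent
  have h := sn_top_aux hnc (Nat.card ↥K) (A.subgroupOf K) (Nat.sub_le _ _)
  have h2 := sn_map K.subtype h
  rwa [Subgroup.subgroupOf_map_subtype, inf_eq_left.mpr hAK,
    ← MonoidHom.range_eq_map, Subgroup.range_subtype] at h2

/-- A `p`-subgroup containing `x` is contained in the subnormalizer of `x`. -/
theorem pgroup_le_subnormalizer [Finite G] {p : ℕ} (hp : p.Prime) {x : G} {R : Subgroup G}
    (hR : IsPGroup p R) (hxR : x ∈ R) : R ≤ subnormalizer x := by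
  intro u hu
  apply Subgroup.subset_closure
  show IsSubnormalIn (zpowers x) (closure {u, x})
  have h1 : IsSubnormalIn (zpowers x) R := sn_of_le_pgroup hp hR (zpowers_le.mpr hxR)
  refine sn_descend h1 ?_ ?_
  · exact zpowers_le.mpr (subset_closure (by simp))
  · exact (closure_le R).mpr (by rintro g (rfl | rfl) <;> assumption)

/-- The normalizer of a `p`-subgroup containing `x` is in the subnormalizer of `x`. -/
theorem normalizer_le_subnormalizer [Finite G] {p : ℕ} (hp : p.Prime) {x : G} {R : Subgroup G}
    (hR : IsPGroup p R) (hxR : x ∈ R) : (normalizer R) ≤ subnormalizer x := by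
  intro n hn
  apply Subgroup.subset_closure
  show IsSubnormalIn (zpowers x) (closure {n, x})
  have h1 : IsSubnormalIn (zpowers x) R := sn_of_le_pgroup hp hR (zpowers_le.mpr hxR)
  have hKle : R ⊔ zpowers n ≤ (normalizer R) := sup_le le_normalizer (zpowers_le.mpr hn)
  have h2 : IsSubnormalIn (zpowers x) (R ⊔ zpowers n) := by
    refine sn_append h1 le_sup_left ?_
    intro g hg a ha
    exact (Subgroup.mem_normalizer_iff.mp (hKle hg) a).mp ha
  refine sn_descend h2 (zpowers_le.mpr (subset_closure (by simp))) ?_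
  refine (closure_le _).mpr ?_
  rintro g (rfl | rfl)
  · exact Subgroup.mem_sup_right (mem_zpowers g)
  · exact Subgroup.mem_sup_left hxR

/-- Orbit counting : the size of the orbit of `P` under `S` is congruent mod `p` to the number
of its points fixed by a `p`-subgroup `H ≤ S`. -/
theorem aux_count [Finite G] {p : ℕ} [Fact p.Prime] (S H : Subgroup G) (hHS : H ≤ S)
    (hH : IsPGroup p H) (P : Sylow p G) :
    Nat.card {Q : Sylow p G // Q ∈ orbit S P} ≡
      Nat.card {Q : Sylow p G // Q ∈ orbit S P ∧ ∀ h ∈ H, h • Q = Q} [MOD p] := by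
  classical
  letI sm : SMul H {Q : Sylow p G // Q ∈ orbit S P} :=
    ⟨fun h Q => ⟨(h : G) • Q.1, by
        obtain ⟨s, hs⟩ := Q.2
        refine ⟨⟨(h : G) * (s : G), S.mul_mem (hHS h.2) s.2⟩, ?_⟩
        show ((h : G) * (s : G)) • P = (h : G) • Q.1
        rw [mul_smul, ← hs]
        rfl⟩⟩
  letI : MulAction H {Q : Sylow p G // Q ∈ orbit S P} :=
    { smul := sm.smul
      one_smul := fun Q => Subtype.ext
        (show ((1 : H) : G) • Q.1 = Q.1 by simp)
      mul_smul := fun g h Q => Subtype.ext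
        (show ((g * h : H) : G) • Q.1 = (g : G) • ((h : G) • Q.1) by
          rw [Subgroup.coe_mul, mul_smul]) }
  have hmod := hH.card_modEq_card_fixedPoints {Q : Sylow p G // Q ∈ orbit S P}
  refine hmod.trans ?_
  have e : fixedPoints H {Q : Sylow p G // Q ∈ orbit S P} ≃
      {Q : Sylow p G // Q ∈ orbit S P ∧ ∀ h ∈ H, h • Q = Q} :=
    { toFun := fun Q => ⟨Q.1.1, Q.1.2, fun h hh => congrArg Subtype.val (Q.2 ⟨h, hh⟩)⟩
      invFun := fun Q => ⟨⟨Q.1, Q.2.1⟩, fun h => Subtype.ext (Q.2.2 h h.2)⟩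
      left_inv := fun Q => by ext; rfl
      right_inv := fun Q => rfl }
  rw [Nat.card_congr e]

theorem stmt_10 [Fintype G] {p : ℕ} (hp : p.Prime)
    (x : G) (hx : ∃ k : ℕ, orderOf x = p ^ k)
    (y : G) (hy : y ∈ subnormalizer x) (hconj : ∃ g : G, g⁻¹ * x * g = y) :
    ∃ h ∈ subnormalizer x, h⁻¹ * x * h = y := by
  classical
  haveI : Fact p.Prime := ⟨hp⟩
  obtain ⟨g, hg⟩ := hconj
  set S := subnormalizer x with hS
  obtain ⟨k, hk⟩ := hx
  have hxp : IsPGroup p (zpowers x) := IsPGroup.of_card (by rw [Nat.card_zpowers, hk])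
  obtain ⟨P, hxleP⟩ := hxp.exists_le_sylow
  have hxP : x ∈ (P : Subgroup G) := hxleP (mem_zpowers x)
  have hPS : (P : Subgroup G) ≤ S := pgroup_le_subnormalizer hp P.2 hxP
  have hNPS : normalizer (P : Subgroup G) ≤ S := normalizer_le_subnormalizer hp P.2 hxP
  -- membership in the pointwise smul
  have hmem_smul : ∀ (w : G) (R : Sylow p G) (z : G), z ∈ ((w • R : Sylow p G) : Subgroup G)
      ↔ w⁻¹ * z * w ∈ (R : Subgroup G) := by
    intro w R z
    rw [Sylow.coe_subgroup_smul, Subgroup.mem_pointwise_smul_iff_inv_smul_mem]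
    simp [MulAut.smul_def, mul_assoc]
  -- the orbit of P under S is ≡ 1 mod p
  have hcard1 : Nat.card {Q : Sylow p G // Q ∈ orbit S P} ≡ 1 [MOD p] := by
    have h := aux_count S P hPS P.2 P
    haveI : Unique {Q : Sylow p G // Q ∈ orbit S P ∧ ∀ h ∈ (P : Subgroup G), h • Q = Q} := by
      refine ⟨⟨⟨P, mem_orbit_self P, fun h hh => Sylow.smul_eq_iff_mem_normalizer.mpr
        (le_normalizer hh)⟩⟩, ?_⟩
      rintro ⟨Q, hQO, hQfix⟩
      have hfix : Q ∈ fixedPoints (P : Subgroup G) (Sylow p G) := by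
        rintro ⟨h, hh⟩
        rw [Subgroup.mk_smul]
        exact hQfix h hh
      have hle : (P : Subgroup G) ≤ Q := (P.2.sylow_mem_fixedPoints_iff).mp hfix
      have : (Q : Subgroup G) = P := P.3 Q.2 hle
      exact Subtype.ext (Sylow.ext this)
    have hfix1 : Nat.card
        {Q : Sylow p G // Q ∈ orbit S P ∧ ∀ h ∈ (P : Subgroup G), h • Q = Q} = 1 :=
      Nat.card_unique
    rw [hfix1] at h
    exact h
  -- any p-subgroup of S fixes some element of the orbit
  have hfix_exists : ∀ (H : Subgroup G), H ≤ S → IsPGroup p H →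
      ∃ Q : Sylow p G, Q ∈ orbit S P ∧ ∀ h ∈ H, h • Q = Q := by
    intro H hHS hH
    have h := aux_count S H hHS hH P
    by_contra hne
    haveI : IsEmpty {Q : Sylow p G // Q ∈ orbit S P ∧ ∀ h ∈ H, h • Q = Q} := by
      refine ⟨fun Q => hne ⟨Q.1, Q.2⟩⟩
    have h0 : Nat.card {Q : Sylow p G // Q ∈ orbit S P ∧ ∀ h ∈ H, h • Q = Q} = 0 :=
      Nat.card_of_isEmpty
    rw [h0] at h
    have h1 : (1 : ℕ) ≡ 0 [MOD p] := hcard1.symm.trans h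
    exact hp.ne_one (Nat.dvd_one.mp (Nat.modEq_zero_iff_dvd.mp h1))
  -- any Sylow p-subgroup of G contained in S lies in the orbit
  have horbit_of_le : ∀ R : Sylow p G, (R : Subgroup G) ≤ S → R ∈ orbit S P := by
    intro R hRS
    obtain ⟨Q, hQO, hQfix⟩ := hfix_exists R hRS R.2
    have hfix : Q ∈ fixedPoints (R : Subgroup G) (Sylow p G) := by
      rintro ⟨h, hh⟩
      rw [Subgroup.mk_smul]
      exact hQfix h hh
    have hle : (R : Subgroup G) ≤ Q := (R.2.sylow_mem_fixedPoints_iff).mp hfix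
    have : (Q : Subgroup G) = R := R.3 Q.2 hle
    rwa [← Sylow.ext this]
  -- y is a p-element of S, so y lies in some Sylow in the orbit
  have hyp : IsPGroup p (zpowers y) := by
    have := hxp.map ((MulAut.conj g⁻¹).toMonoidHom)
    rwa [MonoidHom.map_zpowers, show (MulAut.conj g⁻¹).toMonoidHom x = g⁻¹ * x * g by
      simp [MulAut.conj_apply], hg] at this
  have hyS : zpowers y ≤ S := zpowers_le.mpr hy
  obtain ⟨Q, hQO, hQfix⟩ := hfix_exists (zpowers y) hyS hyp
  have hyQ : y ∈ (Q : Subgroup G) := by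
    have hfix : Q ∈ fixedPoints (zpowers y) (Sylow p G) := by
      rintro ⟨h, hh⟩
      rw [Subgroup.mk_smul]
      exact hQfix h hh
    exact (hyp.sylow_mem_fixedPoints_iff.mp hfix) (mem_zpowers y)
  -- Q = s • P for some s ∈ S
  obtain ⟨s, hsP⟩ := hQO
  have hsP' : (s : G) • P = Q := hsP
  have hyP : (s : G)⁻¹ * y * (s : G) ∈ (P : Subgroup G) := by
    rw [← hmem_smul (s : G) P y, hsP']
    exact hyQ
  -- w = g * s ; x ∈ w • P
  set w : G := g * (s : G) with hw
  have hxwP : x ∈ ((w • P : Sylow p G) : Subgroup G) := by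
    rw [hmem_smul]
    have : w⁻¹ * x * w = (s : G)⁻¹ * y * (s : G) := by
      rw [hw, ← hg]; group
    rw [this]
    exact hyP
  -- w • P is a Sylow contained in S, hence in the orbit
  have hwPS : ((w • P : Sylow p G) : Subgroup G) ≤ S :=
    pgroup_le_subnormalizer hp (w • P).2 hxwP
  obtain ⟨c, hcP⟩ := horbit_of_le (w • P) hwPS
  have hcP' : (c : G) • P = w • P := hcP
  -- (c⁻¹ * w) • P = P, so c⁻¹ * w ∈ normalizer P ≤ S
  have hnw : ((c : G)⁻¹ * w) • P = P := by
    rw [mul_smul, ← hcP', inv_smul_smul]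
  have hnwS : (c : G)⁻¹ * w ∈ S := hNPS (Sylow.smul_eq_iff_mem_normalizer.mp hnw)
  have hwS : w ∈ S := by
    have := S.mul_mem c.2 hnwS
    rwa [mul_inv_cancel_left] at this
  have hgS : g ∈ S := by
    have := S.mul_mem hwS (S.inv_mem s.2)
    rwa [hw, mul_assoc, mul_inv_cancel, mul_one] at this
  exact ⟨g, hgS, hg⟩
end

section
/- Let G be a finite group, p a prime, x a p-element of G. Then Sub_G(x) is the smallest subgroup R of G such that R contains the centralizer C_G(x), R contains some Sylow p-subgroup of G, and any two G-conjugate elements of R lying in the G-class of x that lie in R are R-conjugate (i.e., whenever xᵍ ∈ R for g ∈ G, x and xᵍ are R-conjugate). -/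
open Subgroup Pointwise

variable {G : Type*} [Group G]

/-- restriction of a subnormal chain to an intermediate subgroup -/
lemma IsSubnormalIn.of_le {A B H : Subgroup G} (hAB : IsSubnormalIn A B)
    (hAH : A ≤ H) (hHB : H ≤ B) : IsSubnormalIn A H := by
  obtain ⟨n, s, h0, hn, hc⟩ := hAB
  refine ⟨n, fun i => s i ⊓ H, by simp only []; rw [h0, inf_eq_left.mpr hAH], by simp only []; rw [hn, inf_eq_right.mpr hHB], ?_⟩
  intro i hi
  refine ⟨inf_le_inf_right H (hc i hi).1, ?_⟩
  rintro g ⟨hg1, hg2⟩ a ⟨ha1, ha2⟩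
  exact ⟨(hc i hi).2 g hg1 a ha1, H.mul_mem (H.mul_mem hg2 ha2) (H.inv_mem hg2)⟩

lemma card_lt_of_lt {H K : Subgroup G} [Finite G] (h : H < K) : Nat.card H < Nat.card K := by
  have hs : (H : Set G) ⊂ (K : Set G) := by
    rw [Set.ssubset_iff_of_subset (by exact_mod_cast h.le)]
    obtain ⟨a, haK, haH⟩ := SetLike.exists_of_lt h
    exact ⟨a, haK, haH⟩
  have h1 : Nat.card H = (H : Set G).ncard := Nat.card_coe_set_eq _
  have h2 : Nat.card K = (K : Set G).ncard := Nat.card_coe_set_eq _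
  rw [h1, h2]
  exact Set.ncard_lt_ncard hs (Set.toFinite _)

/-- normalizer condition transferred to p-subgroups of G -/
lemma exists_mem_normalizer_of_lt {p : ℕ} (hp : p.Prime) [Finite G] {K T : Subgroup G}
    (hT : IsPGroup p T) (hKT : K < T) :
    ∃ a : G, a ∈ T ∧ a ∉ K ∧ a ∈ normalizer (K : Set G) := by
  haveI : Fact p.Prime := ⟨hp⟩
  haveI : Group.IsNilpotent ↥T := hT.isNilpotent
  have hnc : NormalizerCondition ↥T := normalizerCondition_of_isNilpotent
  have hlt : K.subgroupOf T < ⊤ := by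
    rcases SetLike.exists_of_lt hKT with ⟨b, hbT, hbK⟩
    refine lt_top_iff_ne_top.mpr fun htop => hbK ?_
    have : (⟨b, hbT⟩ : T) ∈ K.subgroupOf T := htop ▸ mem_top _
    simpa [mem_subgroupOf] using this
  obtain ⟨a, haN, haK⟩ := SetLike.exists_of_lt (hnc _ hlt)
  refine ⟨(a : G), a.2, by simpa [mem_subgroupOf] using haK, ?_⟩
  rw [mem_normalizer_iff]
  intro h
  constructor
  · intro hh
    have hhT : h ∈ T := hKT.le hh
    have : (⟨h, hhT⟩ : T) ∈ K.subgroupOf T := by simpa [mem_subgroupOf]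
    have := (mem_normalizer_iff.mp haN ⟨h, hhT⟩).mp this
    simpa [mem_subgroupOf] using this
  · intro hh
    have hhT' : (a : G) * h * (a : G)⁻¹ ∈ T := hKT.le hh
    have hhT : h ∈ T := by
      have := T.mul_mem (T.mul_mem (T.inv_mem a.2) hhT') a.2
      simpa [mul_assoc] using this
    have h2 : a * ⟨h, hhT⟩ * a⁻¹ ∈ K.subgroupOf T := by
      simpa [mem_subgroupOf] using hh
    have := (mem_normalizer_iff.mp haN ⟨h, hhT⟩).mpr h2
    simpa [mem_subgroupOf] using this

/-- every subgroup of a p-group is subnormal in it -/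
lemma isSubnormalIn_of_pGroup {p : ℕ} (hp : p.Prime) [Finite G] {A T : Subgroup G}
    (hT : IsPGroup p T) (hAT : A ≤ T) : IsSubnormalIn A T := by
  classical
  set f : Subgroup G → Subgroup G := fun K => normalizer (K : Set G) ⊓ T with hf
  set s : ℕ → Subgroup G := fun i => f^[i] A with hs
  have hs0 : s 0 = A := rfl
  have hsucc : ∀ i, s (i + 1) = f (s i) := by
    intro i; simp [hs, Function.iterate_succ_apply']
  have hle : ∀ i, s i ≤ T := by
    intro i; induction i with
    | zero => exact hAT
    | succ n _ => rw [hsucc]; exact inf_le_right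
  have hmono : ∀ i, s i ≤ s (i + 1) := by
    intro i; rw [hsucc]; exact le_inf le_normalizer (hle i)
  have htop : ∀ i, s i = T ∨ i < Nat.card (s i) := by
    intro i; induction i with
    | zero => right; exact Nat.card_pos
    | succ n ih =>
      rcases ih with h | h
      · left; rw [hsucc, h, hf]; simp [inf_eq_right.mpr (le_normalizer)]
      · by_cases he : s n = T
        · left; rw [hsucc, he, hf]; simp [inf_eq_right.mpr (le_normalizer)]
        · right
          have hlt : s n < s (n + 1) := by
            obtain ⟨a, haT, haK, haN⟩ := exists_mem_normalizer_of_lt hp hT (lt_of_le_of_ne (hle n) he)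
            refine lt_of_le_of_ne (hmono n) fun hEq => haK ?_
            have : a ∈ s (n+1) := by rw [hsucc]; exact ⟨haN, haT⟩
            rwa [← hEq] at this
          exact lt_of_lt_of_le (Nat.succ_lt_succ h) (card_lt_of_lt hlt)
  have hfin : s (Nat.card G) = T := by
    rcases htop (Nat.card G) with h | h
    · exact h
    · have h2 : Nat.card ↥(s (Nat.card G)) ≤ Nat.card G := card_le_card_group _
      omega
  refine ⟨Nat.card G, s, hs0, hfin, fun i _ => ⟨hmono i, ?_⟩⟩
  intro g hg a ha
  rw [hsucc] at hg
  exact (mem_normalizer_iff.mp hg.1 a).mp ha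

/-- the normalizer of any p-subgroup containing x is inside the subnormalizer -/
lemma normalizer_le_subnormalizer_s11 {p : ℕ} (hp : p.Prime) [Finite G] {x : G} {T : Subgroup G}
    (hT : IsPGroup p T) (hxT : x ∈ T) {u : G} (hu : u ∈ normalizer (T : Set G)) :
    u ∈ subnormalizer x := by
  apply Subgroup.subset_closure
  show IsSubnormalIn (zpowers x) (Subgroup.closure {u, x})
  set K : Subgroup G := Subgroup.closure (insert u (T : Set G)) with hK
  have hKN : K ≤ normalizer (T : Set G) := by
    rw [hK]; apply Subgroup.closure_le _ |>.mpr
    rintro a (rfl | haT)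
    · exact hu
    · exact le_normalizer haT
  have hTK : T ≤ K := le_trans (by exact fun a ha => Subgroup.subset_closure (Set.mem_insert_of_mem _ ha)) le_rfl
  have hsnT : IsSubnormalIn (zpowers x) T := isSubnormalIn_of_pGroup hp hT (zpowers_le.mpr hxT)
  obtain ⟨n, s, h0, hn, hc⟩ := hsnT
  have hsnK : IsSubnormalIn (zpowers x) K := by
    refine ⟨n + 1, fun i => if i ≤ n then s i else K, by simp [h0], by simp, ?_⟩
    intro i hi
    by_cases hin : i < n
    · have h1 : (if i ≤ n then s i else K) = s i := if_pos (le_of_lt hin)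
      have h2 : (if i + 1 ≤ n then s (i+1) else K) = s (i+1) := if_pos hin
      simp only [h1, h2]
      exact hc i hin
    · have hieq : i = n := by omega
      subst hieq
      have h1 : (if i ≤ i then s i else K) = s i := if_pos le_rfl
      have h2 : (if i + 1 ≤ i then s (i+1) else K) = K := if_neg (by omega)
      simp only [h1, h2]
      rw [hn]
      exact ⟨hTK, fun g hg a ha => (mem_normalizer_iff.mp (hKN hg) a).mp ha⟩
  refine hsnK.of_le (zpowers_le.mpr ?_) (Subgroup.closure_le _ |>.mpr ?_)
  · exact Subgroup.subset_closure (Set.mem_insert_of_mem _ (by exact Set.mem_singleton x))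
  · rintro a (rfl | rfl)
    · exact Subgroup.subset_closure (Set.mem_insert _ _)
    · exact hTK hxT

lemma pgroup_zpowers_of_order {p : ℕ} {x : G} {k : ℕ} (h : orderOf x = p ^ k) :
    IsPGroup p (Subgroup.zpowers x) :=
  IsPGroup.of_card (by rw [Nat.card_zpowers, h])

lemma sylow_le_subnormalizer {p : ℕ} (hp : p.Prime) [Finite G] {x : G}
    (P : Sylow p G) (hxP : x ∈ (P : Subgroup G)) :
    (P : Subgroup G) ≤ subnormalizer x := by
  intro g hg
  apply Subgroup.subset_closure
  show IsSubnormalIn (zpowers x) (Subgroup.closure {g, x})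
  have hcl : Subgroup.closure {g, x} ≤ (P : Subgroup G) := by
    apply Subgroup.closure_le _ |>.mpr
    rintro a (rfl | rfl) <;> assumption
  exact isSubnormalIn_of_pGroup hp (P.2.to_le hcl) (zpowers_le.mpr (Subgroup.subset_closure (by simp)))

lemma centralizer_le_subnormalizer {p : ℕ} (hp : p.Prime) [Finite G] {x : G} {k : ℕ}
    (hx : orderOf x = p ^ k) :
    Subgroup.centralizer {x} ≤ subnormalizer x := by
  intro c hc
  have hcomm : Commute c x := by
    have := Subgroup.mem_centralizer_iff.mp hc x (by simp)
    exact this.symm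
  apply normalizer_le_subnormalizer_s11 hp (pgroup_zpowers_of_order hx) (mem_zpowers x)
  rw [mem_normalizer_iff]
  intro h
  have key : ∀ m : ℤ, c * x ^ m * c⁻¹ = x ^ m := by
    intro m
    have h2 : c * x ^ m = x ^ m * c := (hcomm.zpow_right m).eq
    rw [h2, mul_assoc, mul_inv_cancel, mul_one]
  constructor
  · rintro ⟨m, rfl⟩
    exact ⟨m, (key m).symm⟩
  · rintro ⟨m, hm⟩
    simp only at hm
    refine ⟨m, ?_⟩
    show x ^ m = h
    have key' : c⁻¹ * x ^ m * c = x ^ m := by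
      have h2 : c⁻¹ * x ^ m = x ^ m * c⁻¹ := ((hcomm.inv_left).zpow_right m).eq
      rw [h2, mul_assoc, inv_mul_cancel, mul_one]
    have h3 : h = c⁻¹ * (c * h * c⁻¹) * c := by group
    rw [h3, ← hm, key']

/-- The normal closure of x along a subnormal chain stays a p-group; hence x and g⁻¹xg lie in
a common Sylow p-subgroup. -/
lemma exists_sylow_containing_conj {p : ℕ} (hp : p.Prime) [Fintype G] {x g : G} {k : ℕ}
    (hx : orderOf x = p ^ k)
    (hsn : IsSubnormalIn (Subgroup.zpowers x) (Subgroup.closure {g, x})) :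
    ∃ T : Sylow p G, x ∈ (T : Subgroup G) ∧ g⁻¹ * x * g ∈ (T : Subgroup G) := by
  classical
  haveI : Fact p.Prime := ⟨hp⟩
  obtain ⟨n, s, h0, hn, hc⟩ := hsn
  set C : ℕ → Subgroup G := fun i => Subgroup.closure ((fun h => h * x * h⁻¹) '' (s i : Set G))
    with hC
  have hxmem : ∀ i, i ≤ n → x ∈ s i := by
    intro i
    induction i with
    | zero => intro _; rw [h0]; exact mem_zpowers x
    | succ m ih => intro hm; exact (hc m (by omega)).1 (ih (by omega))
  have hxC : ∀ i, x ∈ C i := by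
    intro i
    apply Subgroup.subset_closure
    exact ⟨1, (s i).one_mem, by group⟩
  have main : ∀ i, i ≤ n → IsPGroup p (C i) ∧ C i ≤ s i ∧
      (∀ g' ∈ s i, ∀ a ∈ C i, g' * a * g'⁻¹ ∈ C i) := by
    intro i
    induction i with
    | zero =>
      intro _
      have hsub : C 0 ≤ Subgroup.zpowers x := by
        apply Subgroup.closure_le _ |>.mpr
        rintro _ ⟨h, hh, rfl⟩
        rw [h0] at hh
        obtain ⟨m, rfl⟩ := hh
        simp only []
        have hcm : Commute (x ^ m) x := (Commute.refl x).zpow_left m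
        have : x ^ m * x * (x ^ m)⁻¹ = x := by
          rw [hcm.eq, mul_assoc, mul_inv_cancel, mul_one]
        rw [this]; exact mem_zpowers x
      refine ⟨(pgroup_zpowers_of_order hx).to_le hsub, by rw [h0]; exact hsub, ?_⟩
      intro g' hg' a ha
      rw [h0] at hg'
      obtain ⟨m, rfl⟩ := hg'
      obtain ⟨l, rfl⟩ := hsub ha
      have hcm : Commute (x ^ m) (x ^ l) := Commute.zpow_zpow_self x m l
      have : x ^ m * x ^ l * (x ^ m)⁻¹ = x ^ l := by
        rw [hcm.eq, mul_assoc, mul_inv_cancel, mul_one]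
      rw [this]; exact ha
    | succ m ih =>
      intro hm
      obtain ⟨ihp, ihle, ihnorm⟩ := ih (by omega)
      have hmn : m < n := by omega
      -- a Sylow p-subgroup of the group s m
      obtain ⟨Q⟩ : Nonempty (Sylow p ↥(s m)) := Sylow.nonempty
      set Q' : Subgroup G := (Q : Subgroup ↥(s m)).map (s m).subtype with hQ'
      have hQ'p : IsPGroup p Q' := Q.2.map _
      have hkey : ∀ h ∈ s (m + 1), h * x * h⁻¹ ∈ Q' := by
        intro h hh
        set M : Subgroup G := (C m).map (MulAut.conj h).toMonoidHom with hM
        have hMp : IsPGroup p M := ihp.map _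
        have hMle : M ≤ s m := by
          rintro _ ⟨a, ha, rfl⟩
          simpa using (hc m hmn).2 h hh a (ihle ha)
        have hMnorm : ∀ g' ∈ s m, ∀ b ∈ M, g' * b * g'⁻¹ ∈ M := by
          rintro g' hg' _ ⟨a, ha, rfl⟩
          have hb : h⁻¹ * g' * h ∈ s m := by
            have := (hc m hmn).2 h⁻¹ ((s (m+1)).inv_mem hh) g' hg'
            simpa using this
          have hconj : (h⁻¹ * g' * h) * a * (h⁻¹ * g' * h)⁻¹ ∈ C m := ihnorm _ hb a ha
          refine ⟨_, hconj, ?_⟩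
          simp only [MulEquiv.coe_toMonoidHom, MulAut.conj_apply]
          group
        have hM'p : IsPGroup p (M.subgroupOf (s m)) :=
          hMp.of_equiv (Subgroup.subgroupOfEquivOfLe hMle).symm
        haveI hM'norm : (M.subgroupOf (s m)).Normal := by
          constructor
          intro b hb g'
          rw [mem_subgroupOf] at hb ⊢
          exact hMnorm g' g'.2 b hb
        have hMQ : M.subgroupOf (s m) ≤ (Q : Subgroup ↥(s m)) := by
          have hsup : IsPGroup p ↥(Q.toSubgroup ⊔ M.subgroupOf (s m)) :=
            Q.2.to_sup_of_normal_right hM'p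
          have := Q.3 hsup le_sup_left
          exact le_sup_right.trans this.le
        have hxM : h * x * h⁻¹ ∈ M := ⟨x, hxC m, by simp [MulAut.conj_apply]⟩
        have hmem : h * x * h⁻¹ ∈ s m := hMle hxM
        refine ⟨⟨h * x * h⁻¹, hmem⟩, hMQ (by rwa [mem_subgroupOf]), rfl⟩
      have hCle : C (m + 1) ≤ Q' := by
        apply Subgroup.closure_le _ |>.mpr
        rintro _ ⟨h, hh, rfl⟩
        exact hkey h hh
      refine ⟨hQ'p.to_le hCle, ?_, ?_⟩
      · apply Subgroup.closure_le _ |>.mpr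
        rintro _ ⟨h, hh, rfl⟩
        exact mul_mem (mul_mem hh (hxmem (m+1) hm)) ((s (m+1)).inv_mem hh)
      · intro g' hg' a ha
        induction ha using Subgroup.closure_induction with
        | mem b hb =>
          obtain ⟨h, hh, rfl⟩ := hb
          apply Subgroup.subset_closure
          exact ⟨g' * h, mul_mem hg' hh, by group⟩
        | one => simpa using (C (m+1)).one_mem
        | mul b c _ _ hb hc =>
          have : g' * (b * c) * g'⁻¹ = (g' * b * g'⁻¹) * (g' * c * g'⁻¹) := by group
          rw [this]; exact mul_mem hb hc
        | inv b _ hb =>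
          have : g' * b⁻¹ * g'⁻¹ = (g' * b * g'⁻¹)⁻¹ := by group
          rw [this]; exact inv_mem hb
  obtain ⟨hpC, -, -⟩ := main n le_rfl
  obtain ⟨T, hT⟩ := hpC.exists_le_sylow
  refine ⟨T, hT (hxC n), hT ?_⟩
  have hg : g⁻¹ ∈ s n := by
    rw [hn]
    exact inv_mem (Subgroup.subset_closure (by simp))
  apply Subgroup.subset_closure
  exact ⟨g⁻¹, hg, by group⟩

section min
variable {p : ℕ} [Fintype G] {x : G} (R : Subgroup G)
  (hC : Subgroup.centralizer {x} ≤ R)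
  (hfus : ∀ g : G, g⁻¹ * x * g ∈ R → ∃ r ∈ R, r⁻¹ * x * r = g⁻¹ * x * g)

include hC hfus in
lemma mem_of_conj_mem {a : G} (ha : a⁻¹ * x * a ∈ R) : a ∈ R := by
  obtain ⟨r, hrR, hr⟩ := hfus a ha
  have hcent : a * r⁻¹ ∈ Subgroup.centralizer {x} := by
    rw [Subgroup.mem_centralizer_iff]
    rintro h rfl
    calc h * (a * r⁻¹) = a * (a⁻¹ * h * a) * r⁻¹ := by group
      _ = a * (r⁻¹ * h * r) * r⁻¹ := by rw [← hr]
      _ = (a * r⁻¹) * h := by group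
  have : a = (a * r⁻¹) * r := by group
  rw [this]
  exact R.mul_mem (hC hcent) hrR

include hC hfus in
lemma sylow_le_R (hp : p.Prime) (hP : ∃ P : Sylow p G, (P : Subgroup G) ≤ R)
    (T : Sylow p G) (hxT : x ∈ (T : Subgroup G)) : (T : Subgroup G) ≤ R := by
  haveI : Fact p.Prime := ⟨hp⟩
  obtain ⟨P₀, hP₀⟩ := hP
  obtain ⟨a, ha⟩ := MulAction.exists_smul_eq G P₀ T
  have hcoe : (T : Subgroup G) = MulAut.conj a • (P₀ : Subgroup G) := by
    rw [← ha]; rfl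
  have hmem : ∀ t : G, t ∈ (T : Subgroup G) ↔ a⁻¹ * t * a ∈ (P₀ : Subgroup G) := by
    intro t
    rw [hcoe, Subgroup.mem_pointwise_smul_iff_inv_smul_mem]
    constructor <;> intro h <;> simpa using h
  have haR : a ∈ R := by
    apply mem_of_conj_mem R hC hfus
    exact hP₀ ((hmem x).mp hxT)
  intro t ht
  have h1 : a⁻¹ * t * a ∈ R := hP₀ ((hmem t).mp ht)
  have h2 : t = a * (a⁻¹ * t * a) * a⁻¹ := by group
  rw [h2]
  exact R.mul_mem (R.mul_mem haR h1) (R.inv_mem haR)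

include hC hfus in
lemma subnormalizer_le (hp : p.Prime) {k : ℕ} (hx : orderOf x = p ^ k)
    (hP : ∃ P : Sylow p G, (P : Subgroup G) ≤ R) : subnormalizer x ≤ R := by
  apply Subgroup.closure_le _ |>.mpr
  intro g hg
  obtain ⟨T, hxT, hgT⟩ := exists_sylow_containing_conj hp hx hg
  exact mem_of_conj_mem R hC hfus (sylow_le_R R hC hfus hp hP T hxT hgT)
end min

lemma mem_conj_smul (c : G) (H : Subgroup G) (a : G) :
    a ∈ MulAut.conj c • H ↔ c⁻¹ * a * c ∈ H := by
  rw [Subgroup.mem_pointwise_smul_iff_inv_smul_mem, ← map_inv MulAut.conj]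
  simp [MulAut.conj_apply, mul_assoc]

lemma card_conj_smul (c : G) (H : Subgroup G) :
    Nat.card ↥(MulAut.conj c • H : Subgroup G) = Nat.card H :=
  (Nat.card_congr (Subgroup.equivSMul (MulAut.conj c) H).toEquiv).symm

lemma conj_smul_le_conj_smul {H K : Subgroup G} (h : H ≤ K) (c : G) :
    MulAut.conj c • H ≤ MulAut.conj c • K := by
  intro a ha
  rw [mem_conj_smul] at ha ⊢
  exact h ha

lemma conj_mem_normalizer_smul {H : Subgroup G} {u : G} (hu : u ∈ normalizer (H : Set G)) (c : G) :
    c * u * c⁻¹ ∈ normalizer ((MulAut.conj c • H : Subgroup G) : Set G) := by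
  rw [mem_normalizer_iff]
  intro h
  rw [mem_conj_smul, mem_conj_smul]
  have key := mem_normalizer_iff.mp hu (c⁻¹ * h * c)
  have e : c⁻¹ * (c * u * c⁻¹ * h * (c * u * c⁻¹)⁻¹) * c = u * (c⁻¹ * h * c) * u⁻¹ := by group
  rw [e]
  exact key

def ConjStep (p : ℕ) (z w : G) : Prop :=
  ∃ T : Subgroup G, IsPGroup p T ∧ z ∈ T ∧ ∃ u ∈ normalizer (T : Set G), w = u * z * u⁻¹

def ConjRel (p : ℕ) : G → G → Prop := Relation.ReflTransGen (ConjStep p)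

lemma ConjStep.symm' {p : ℕ} {z w : G} (h : ConjStep p z w) : ConjStep p w z := by
  obtain ⟨T, hT, hz, u, hu, rfl⟩ := h
  have hw : u * z * u⁻¹ ∈ T := (mem_normalizer_iff.mp hu z).mp hz
  exact ⟨T, hT, hw, u⁻¹, (normalizer (T : Set G)).inv_mem hu, by group⟩

lemma ConjRel.symm' {p : ℕ} {z w : G} (h : ConjRel p z w) : ConjRel p w z := by
  induction h with
  | refl => exact Relation.ReflTransGen.refl
  | tail _ hstep ih =>
    exact Relation.ReflTransGen.trans (Relation.ReflTransGen.single hstep.symm') ih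

/-- Weak Alperin fusion: any Sylow subgroup can be moved onto `P` by a chain of conjugations,
each normalizing a p-subgroup containing the running intersection. -/
lemma alperin_weak {p : ℕ} (hp : p.Prime) [Fintype G] (P : Sylow p G) (Q : Sylow p G) :
    ∃ h : G, h • Q = P ∧
      ∀ z ∈ (P : Subgroup G) ⊓ (Q : Subgroup G), ConjRel p z (h * z * h⁻¹) := by
  haveI : Fact p.Prime := ⟨hp⟩
  suffices H : ∀ m : ℕ, ∀ Q : Sylow p G,
      Nat.card G - Nat.card ↥((P : Subgroup G) ⊓ (Q : Subgroup G)) = m →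
      ∃ h : G, h • Q = P ∧
        ∀ z ∈ (P : Subgroup G) ⊓ (Q : Subgroup G), ConjRel p z (h * z * h⁻¹) by
    exact H _ Q rfl
  intro m
  induction m using Nat.strong_induction_on with
  | _ m IH =>
  intro Q hm
  by_cases hPQ : Q = P
  · subst hPQ
    refine ⟨1, one_smul _ _, fun z _ => ?_⟩
    have e1 : (1 : G) * z * (1 : G)⁻¹ = z := by group
    rw [e1]
    exact Relation.ReflTransGen.refl
  · set D : Subgroup G := (P : Subgroup G) ⊓ (Q : Subgroup G) with hD
    have hDP : D < (P : Subgroup G) := by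
      refine lt_of_le_of_ne inf_le_left fun hEq => hPQ ?_
      have h1 : (P : Subgroup G) ≤ (Q : Subgroup G) := hEq ▸ inf_le_right
      have h2 : (Q : Subgroup G) = (P : Subgroup G) := P.3 Q.2 h1
      exact Sylow.ext h2
    have hDQ : D < (Q : Subgroup G) := by
      refine lt_of_le_of_ne inf_le_right fun hEq => hPQ ?_
      have h1 : (Q : Subgroup G) ≤ (P : Subgroup G) := hEq ▸ inf_le_left
      have h2 : (P : Subgroup G) = (Q : Subgroup G) := Q.3 P.2 h1
      exact Sylow.ext h2.symm
    obtain ⟨a, haP, haD, haN⟩ := exists_mem_normalizer_of_lt hp P.2 hDP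
    obtain ⟨b, hbQ, hbD, hbN⟩ := exists_mem_normalizer_of_lt hp Q.2 hDQ
    set N : Subgroup G := normalizer (D : Set G) with hN
    set NPD : Subgroup G := (P : Subgroup G) ⊓ N with hNPD
    set NQD : Subgroup G := (Q : Subgroup G) ⊓ N with hNQD
    have hDleN : D ≤ N := le_normalizer
    have hNPDp : IsPGroup p NPD := P.2.to_le inf_le_left
    have hNQDp : IsPGroup p NQD := Q.2.to_le inf_le_left
    -- Sylow subgroup of N containing NPD
    have hNPDp' : IsPGroup p (NPD.subgroupOf N) :=
      hNPDp.of_equiv (Subgroup.subgroupOfEquivOfLe inf_le_right).symm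
    obtain ⟨Wn, hWn⟩ := hNPDp'.exists_le_sylow
    set W : Subgroup G := (Wn : Subgroup ↥N).map N.subtype with hW
    have hWp : IsPGroup p W := Wn.2.map _
    obtain ⟨RR, hWR⟩ := hWp.exists_le_sylow
    -- Sylow subgroup of N containing NQD, conjugate into Wn
    have hNQDp' : IsPGroup p (NQD.subgroupOf N) :=
      hNQDp.of_equiv (Subgroup.subgroupOfEquivOfLe inf_le_right).symm
    obtain ⟨Wn2, hWn2⟩ := hNQDp'.exists_le_sylow
    obtain ⟨un, hun⟩ := MulAction.exists_smul_eq ↥N Wn2 Wn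
    set u : G := (un : G) with hu
    have huN : u ∈ N := un.2
    -- NPD ≤ W
    have hNPDW : NPD ≤ W := by
      have : NPD = (NPD.subgroupOf N).map N.subtype := by
        rw [Subgroup.subgroupOf_map_subtype, inf_eq_left.mpr inf_le_right]
      rw [this]
      exact Subgroup.map_mono hWn
    -- conj u • NQD ≤ W
    have hmapsmul : (MulAut.conj u • ((Wn2 : Subgroup ↥N).map N.subtype) : Subgroup G) = W := by
      have hcoe : ((un • Wn2 : Sylow p ↥N) : Subgroup ↥N) = MulAut.conj un • (Wn2 : Subgroup ↥N) :=
        Sylow.coe_subgroup_smul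
      rw [hW, ← hun, hcoe]
      ext g
      simp only [Subgroup.mem_map, Subgroup.coe_subtype]
      constructor
      · intro hg
        rw [mem_conj_smul] at hg
        simp only [Subgroup.mem_map, Subgroup.coe_subtype] at hg
        obtain ⟨w, hw, hwg⟩ := hg
        refine ⟨un * w * un⁻¹, ?_, ?_⟩
        · show (un * w * un⁻¹ : ↥N) ∈ (MulAut.conj un • (Wn2 : Subgroup ↥N) : Subgroup ↥N)
          rw [mem_conj_smul]
          have e : un⁻¹ * (un * w * un⁻¹) * un = w := by group
          rw [e]; exact hw
        · have e2 : ((un * w * un⁻¹ : ↥N) : G) = u * (w : G) * u⁻¹ := by push_cast; rfl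
          rw [e2, hwg]
          group
      · rintro ⟨v, hv, rfl⟩
        have hv' : (v : ↥N) ∈ (MulAut.conj un • (Wn2 : Subgroup ↥N) : Subgroup ↥N) := hv
        rw [mem_conj_smul] at hv'
        show ((v : ↥N) : G) ∈ (MulAut.conj u • ((Wn2 : Subgroup ↥N).map N.subtype) : Subgroup G)
        rw [mem_conj_smul]
        simp only [Subgroup.mem_map, Subgroup.coe_subtype]
        refine ⟨un⁻¹ * v * un, hv', ?_⟩
        push_cast
        group
        rfl
    have hNQDle : NQD ≤ (Wn2 : Subgroup ↥N).map N.subtype := by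
      have : NQD = (NQD.subgroupOf N).map N.subtype := by
        rw [Subgroup.subgroupOf_map_subtype, inf_eq_left.mpr inf_le_right]
      rw [this]
      exact Subgroup.map_mono hWn2
    have hNQDW : (MulAut.conj u • NQD : Subgroup G) ≤ W := by
      rw [← hmapsmul]
      exact conj_smul_le_conj_smul hNQDle u
    -- conj u fixes D
    have hDu : (MulAut.conj u • D : Subgroup G) = D := by
      ext g
      rw [mem_conj_smul]
      have key := mem_normalizer_iff.mp huN (u⁻¹ * g * u)
      have e : u * (u⁻¹ * g * u) * u⁻¹ = g := by group
      rw [e] at key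
      exact key
    set Q₁ : Sylow p G := u • Q with hQ₁
    have hQ₁coe : (Q₁ : Subgroup G) = MulAut.conj u • (Q : Subgroup G) := Sylow.coe_subgroup_smul
    -- D ≤ everything relevant
    have hDRR : D ≤ RR := le_trans (le_trans (le_inf hDP.le hDleN) hNPDW) hWR
    have hDQ₁ : D ≤ (Q₁ : Subgroup G) := by
      rw [hQ₁coe, ← hDu]
      exact conj_smul_le_conj_smul inf_le_right u
    -- strict inclusions for the measure
    have hlt1 : D < (P : Subgroup G) ⊓ RR := by
      refine lt_of_le_of_ne (le_inf hDP.le hDRR) fun hEq => haD ?_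
      have : a ∈ (P : Subgroup G) ⊓ RR := ⟨haP, hWR (hNPDW ⟨haP, haN⟩)⟩
      rwa [← hEq] at this
    have hlt2 : D < (Q₁ : Subgroup G) ⊓ RR := by
      refine lt_of_le_of_ne (le_inf hDQ₁ hDRR) fun hEq => hbD ?_
      have hbW : u * b * u⁻¹ ∈ (MulAut.conj u • NQD : Subgroup G) := by
        rw [mem_conj_smul]
        have e : u⁻¹ * (u * b * u⁻¹) * u = b := by group
        rw [e]; exact ⟨hbQ, hbN⟩
      have hmem : u * b * u⁻¹ ∈ (Q₁ : Subgroup G) ⊓ RR := by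
        refine ⟨?_, hWR (hNQDW hbW)⟩
        rw [hQ₁coe]
        show u * b * u⁻¹ ∈ (MulAut.conj u • (Q : Subgroup G) : Subgroup G)
        rw [mem_conj_smul]
        have e : u⁻¹ * (u * b * u⁻¹) * u = b := by group
        rw [e]; exact hbQ
      rw [← hEq] at hmem
      have hmem2 : u * b * u⁻¹ ∈ (MulAut.conj u • D : Subgroup G) := by rw [hDu]; exact hmem
      rw [mem_conj_smul] at hmem2
      have e : u⁻¹ * (u * b * u⁻¹) * u = b := by group
      rwa [e] at hmem2
    -- first induction: move RR onto P
    have hcard1 : Nat.card ↥D < Nat.card ↥((P : Subgroup G) ⊓ RR) := card_lt_of_lt hlt1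
    have hcardG1 : Nat.card ↥((P : Subgroup G) ⊓ RR) ≤ Nat.card G := card_le_card_group _
    have hcardG0 : Nat.card ↥D ≤ Nat.card G := card_le_card_group _
    obtain ⟨c, hcR, htrack1⟩ := IH (Nat.card G - Nat.card ↥((P : Subgroup G) ⊓ RR))
      (by omega) RR rfl
    have hcRcoe : MulAut.conj c • (RR : Subgroup G) = (P : Subgroup G) := by
      rw [← Sylow.coe_subgroup_smul, hcR]
    -- second induction: move Q₂ := (c * u) • Q onto P
    set Q₂ : Sylow p G := c • Q₁ with hQ₂
    have hQ₂coe : (Q₂ : Subgroup G) = MulAut.conj c • (Q₁ : Subgroup G) := Sylow.coe_subgroup_smul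
    have hsmul_inf : (MulAut.conj c • ((Q₁ : Subgroup G) ⊓ RR) : Subgroup G)
        = (Q₂ : Subgroup G) ⊓ (P : Subgroup G) := by
      rw [Subgroup.smul_inf, hQ₂coe, hcRcoe]
    have hle2 : (MulAut.conj c • ((Q₁ : Subgroup G) ⊓ RR) : Subgroup G)
        ≤ (P : Subgroup G) ⊓ (Q₂ : Subgroup G) := by
      rw [hsmul_inf]; exact le_inf inf_le_right inf_le_left
    have hcard2 : Nat.card ↥D < Nat.card ↥((P : Subgroup G) ⊓ (Q₂ : Subgroup G)) := by
      calc Nat.card ↥D < Nat.card ↥((Q₁ : Subgroup G) ⊓ RR) := card_lt_of_lt hlt2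
        _ = Nat.card ↥(MulAut.conj c • ((Q₁ : Subgroup G) ⊓ RR) : Subgroup G) :=
            (card_conj_smul _ _).symm
        _ ≤ _ := Subgroup.card_le_of_le hle2
    have hcardG2 : Nat.card ↥((P : Subgroup G) ⊓ (Q₂ : Subgroup G)) ≤ Nat.card G :=
      card_le_card_group _
    obtain ⟨d, hdQ₂, htrack2⟩ := IH (Nat.card G - Nat.card ↥((P : Subgroup G) ⊓ (Q₂ : Subgroup G)))
      (by omega) Q₂ rfl
    refine ⟨d * c * u, ?_, ?_⟩
    · have : (d * c * u) • Q = d • (c • (u • Q)) := by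
        rw [mul_smul, mul_smul]
      rw [this, ← hQ₁, ← hQ₂, hdQ₂]
    · intro z hz
      -- step 1 : z → u z u⁻¹
      have hzD : z ∈ D := hz
      have step1 : ConjStep p z (u * z * u⁻¹) :=
        ⟨D, P.2.to_le inf_le_left, hzD, u, huN, rfl⟩
      set z₁ : G := u * z * u⁻¹ with hz₁
      have hz₁D : z₁ ∈ D := by
        rw [← hDu]
        show z₁ ∈ (MulAut.conj u • D : Subgroup G)
        rw [mem_conj_smul]
        have e : u⁻¹ * (u * z * u⁻¹) * u = z := by group
        rw [hz₁, e]; exact hzD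
      have hz₁PR : z₁ ∈ (P : Subgroup G) ⊓ RR := ⟨hDP.le hz₁D, hDRR hz₁D⟩
      have step2 : ConjRel p z₁ (c * z₁ * c⁻¹) := htrack1 z₁ hz₁PR
      set z₂ : G := c * z₁ * c⁻¹ with hz₂
      have hz₂PQ₂ : z₂ ∈ (P : Subgroup G) ⊓ (Q₂ : Subgroup G) := by
        apply hle2
        have hmm : z₁ ∈ (Q₁ : Subgroup G) ⊓ RR := ⟨hDQ₁ hz₁D, hDRR hz₁D⟩
        show z₂ ∈ (MulAut.conj c • ((Q₁ : Subgroup G) ⊓ RR) : Subgroup G)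
        rw [mem_conj_smul]
        have e : c⁻¹ * z₂ * c = z₁ := by rw [hz₂]; group
        rw [e]
        exact hmm
      have step3 : ConjRel p z₂ (d * z₂ * d⁻¹) := htrack2 z₂ hz₂PQ₂
      have efinal : d * z₂ * d⁻¹ = (d * c * u) * z * (d * c * u)⁻¹ := by
        rw [hz₂, hz₁]; group
      have hfin : ConjRel p z (d * z₂ * d⁻¹) :=
        Relation.ReflTransGen.trans
          (Relation.ReflTransGen.trans (Relation.ReflTransGen.single step1) step2) step3
      rwa [efinal] at hfin

lemma pgroup_conj_smul {p : ℕ} {T : Subgroup G} (hT : IsPGroup p T) (c : G) :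
    IsPGroup p (MulAut.conj c • T : Subgroup G) :=
  hT.of_equiv (Subgroup.equivSMul (MulAut.conj c) T)

/-- walking along a conjugation chain starting at x keeps us x-conjugate under the
subnormalizer. -/
lemma conjRel_to_subnormalizer {p : ℕ} (hp : p.Prime) [Finite G] {x z : G}
    (h : ConjRel p x z) : ∃ r ∈ subnormalizer x, r⁻¹ * x * r = z := by
  induction h with
  | refl => exact ⟨1, (subnormalizer x).one_mem, by group⟩
  | tail _ hstep ih =>
    obtain ⟨r, hrS, hr⟩ := ih
    obtain ⟨T, hT, hzT, u, hu, rfl⟩ := hstep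
    have hxT0 : x ∈ (MulAut.conj r • T : Subgroup G) := by
      rw [mem_conj_smul, hr]
      exact hzT
    have hvS : r * u * r⁻¹ ∈ subnormalizer x :=
      normalizer_le_subnormalizer_s11 hp (pgroup_conj_smul hT r) hxT0 (conj_mem_normalizer_smul hu r)
    refine ⟨r * u⁻¹, ?_, ?_⟩
    · have e : r * u⁻¹ = (r * u * r⁻¹)⁻¹ * r := by group
      rw [e]
      exact (subnormalizer x).mul_mem ((subnormalizer x).inv_mem hvS) hrS
    · have e2 : (r * u⁻¹)⁻¹ * x * (r * u⁻¹) = u * (r⁻¹ * x * r) * u⁻¹ := by group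
      rw [e2, hr]

/-- fusion in the subnormalizer -/
lemma fusion_in_subnormalizer {p : ℕ} (hp : p.Prime) [Fintype G] {x : G} {k : ℕ}
    (hx : orderOf x = p ^ k) (g : G) (hg : g⁻¹ * x * g ∈ subnormalizer x) :
    ∃ r ∈ subnormalizer x, r⁻¹ * x * r = g⁻¹ * x * g := by
  classical
  haveI : Fact p.Prime := ⟨hp⟩
  set S : Subgroup G := subnormalizer x with hS
  set y : G := g⁻¹ * x * g with hy
  have hyS : y ∈ S := hg
  obtain ⟨P, hzP⟩ := (pgroup_zpowers_of_order hx).exists_le_sylow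
  have hxP : x ∈ (P : Subgroup G) := hzP (mem_zpowers x)
  have hPS : (P : Subgroup G) ≤ S := sylow_le_subnormalizer hp P hxP
  -- y is a p-element
  have hyord : orderOf y = p ^ k := by
    have hsc : SemiconjBy g⁻¹ x y := by
      show g⁻¹ * x = y * g⁻¹
      rw [hy]; group
    rw [← hsc.orderOf_eq g⁻¹, hx]
  -- move y into P by an element of S
  set y' : ↥S := ⟨y, hyS⟩ with hy'
  have hy'ord : orderOf y' = p ^ k := by
    rw [← hyord]
    exact (orderOf_injective S.subtype Subtype.coe_injective y').symm
  have hy'p : IsPGroup p (Subgroup.zpowers y') := pgroup_zpowers_of_order hy'ord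
  obtain ⟨Qy, hQy⟩ := hy'p.exists_le_sylow
  set Pstar : Sylow p ↥S := P.subtype hPS with hPstar
  obtain ⟨σ, hσ⟩ := MulAction.exists_smul_eq ↥S Qy Pstar
  have hy''mem : σ * y' * σ⁻¹ ∈ (Pstar : Subgroup ↥S) := by
    rw [← hσ, Sylow.coe_subgroup_smul, mem_conj_smul]
    have e : σ⁻¹ * (σ * y' * σ⁻¹) * σ = y' := by group
    rw [e]
    exact hQy (mem_zpowers y')
  set s0 : G := (σ : G) with hs0
  have hs0S : s0 ∈ S := σ.2
  have hy₂P : s0 * y * s0⁻¹ ∈ (P : Subgroup G) := by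
    have : ((σ * y' * σ⁻¹ : ↥S) : G) = s0 * y * s0⁻¹ := by push_cast; rfl
    have h2 : σ * y' * σ⁻¹ ∈ (P : Subgroup G).subgroupOf S := by
      rw [← Sylow.coe_subtype]; exact hy''mem
    rw [mem_subgroupOf] at h2
    rwa [this] at h2
  set y₂ : G := s0 * y * s0⁻¹ with hy₂
  set g' : G := s0 * g⁻¹ with hg'
  have hy₂eq : y₂ = g' * x * g'⁻¹ := by rw [hy₂, hy, hg']; group
  set Q0 : Sylow p G := g' • P with hQ0
  have hy₂Q0 : y₂ ∈ (Q0 : Subgroup G) := by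
    rw [hQ0, Sylow.coe_subgroup_smul, mem_conj_smul, hy₂eq]
    have e : g'⁻¹ * (g' * x * g'⁻¹) * g' = x := by group
    rw [e]
    exact hxP
  obtain ⟨h, hhQ0, htrack⟩ := alperin_weak hp P Q0
  have hrel1 : ConjRel p y₂ (h * y₂ * h⁻¹) := htrack y₂ ⟨hy₂P, hy₂Q0⟩
  have hrel2 : ConjStep p x ((h * g') * x * (h * g')⁻¹) := by
    refine ⟨(P : Subgroup G), P.2, hxP, h * g', ?_, rfl⟩
    refine Sylow.smul_eq_iff_mem_normalizer.mp ?_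
    rw [mul_smul, ← hQ0, hhQ0]
  have hrel3 : (h * g') * x * (h * g')⁻¹ = h * y₂ * h⁻¹ := by rw [hy₂eq]; group
  have hrelxy₂ : ConjRel p x y₂ := by
    refine Relation.ReflTransGen.trans (Relation.ReflTransGen.single hrel2) ?_
    rw [hrel3]
    exact hrel1.symm'
  obtain ⟨r₁, hr₁S, hr₁⟩ := conjRel_to_subnormalizer hp hrelxy₂
  refine ⟨r₁ * s0, S.mul_mem hr₁S hs0S, ?_⟩
  show (r₁ * s0)⁻¹ * x * (r₁ * s0) = y
  have e : (r₁ * s0)⁻¹ * x * (r₁ * s0) = s0⁻¹ * (r₁⁻¹ * x * r₁) * s0 := by group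
  rw [e, hr₁, hy₂]
  group

theorem stmt_11 [Fintype G] {p : ℕ} (hp : p.Prime)
    (x : G) (hx : ∃ k : ℕ, orderOf x = p ^ k) :
    (Subgroup.centralizer {x} ≤ subnormalizer x ∧
      (∃ P : Sylow p G, (P : Subgroup G) ≤ subnormalizer x) ∧
      (∀ g : G, g⁻¹ * x * g ∈ subnormalizer x →
        ∃ r ∈ subnormalizer x, r⁻¹ * x * r = g⁻¹ * x * g)) ∧
    ∀ R : Subgroup G,
      Subgroup.centralizer {x} ≤ R →
      (∃ P : Sylow p G, (P : Subgroup G) ≤ R) →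
      (∀ g : G, g⁻¹ * x * g ∈ R → ∃ r ∈ R, r⁻¹ * x * r = g⁻¹ * x * g) →
      subnormalizer x ≤ R := by
  obtain ⟨k, hxk⟩ := hx
  refine ⟨⟨centralizer_le_subnormalizer hp hxk, ?_, ?_⟩, ?_⟩
  · obtain ⟨P, hzP⟩ := (pgroup_zpowers_of_order hxk).exists_le_sylow
    exact ⟨P, sylow_le_subnormalizer hp P (hzP (Subgroup.mem_zpowers x))⟩
  · exact fun g hg => fusion_in_subnormalizer hp hxk g hg
  · intro R hC hP hfus
    exact subnormalizer_le R hC hfus hp hxk hP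
end
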